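/- Let n₁, n₂, n₃ be unit vectors in ℝ³ such that |n_i·n_j| < 1 for every pair i ≠ j (no two of the vectors are parallel or antiparallel). Then √(1 + n₁·n₂) + √(1 + n₁·n₃) + √(1 + n₂·n₃) > √2. -/
import Mathlib


noncomputable section

/-- Euclidean inner product on ℝ³. -/
def dot3 (a b : Fin 3 → ℝ) : ℝ := a 0 * b 0 + a 1 * b 1 + a 2 * b 2

/-- Euclidean norm on ℝ³. -/
def norm3 (a : Fin 3 → ℝ) : ℝ := Real.sqrt (dot3 a a)

set_option maxHeartbeats 1000000

lemma dot3_self_eq_one {n : Fin 3 → ℝ} (h : norm3 n = 1) : dot3 n n = 1 := by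
  have hnn : (0:ℝ) ≤ dot3 n n := by unfold dot3; nlinarith [mul_self_nonneg (n 0), mul_self_nonneg (n 1), mul_self_nonneg (n 2)]
  have := Real.sq_sqrt hnn
  unfold norm3 at h
  rw [h] at this
  linarith [this]

/-- For unit vectors n₁, n₂, n₃ in ℝ³, no two parallel or antiparallel,
√(1 + n₁·n₂) + √(1 + n₁·n₃) + √(1 + n₂·n₃) > √2: the necessary condition for a
state-independent violation of the LSW inequality can never be met. -/
theorem sqrt_sum_gt_sqrt_two (n₁ n₂ n₃ : Fin 3 → ℝ)
    (h1 : norm3 n₁ = 1) (h2 : norm3 n₂ = 1) (h3 : norm3 n₃ = 1)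
    (h12 : |dot3 n₁ n₂| < 1) (h13 : |dot3 n₁ n₃| < 1) (h23 : |dot3 n₂ n₃| < 1) :
    Real.sqrt 2 <
      Real.sqrt (1 + dot3 n₁ n₂) + Real.sqrt (1 + dot3 n₁ n₃) + Real.sqrt (1 + dot3 n₂ n₃) := by
  have d1 := dot3_self_eq_one h1
  have d2 := dot3_self_eq_one h2
  have d3 := dot3_self_eq_one h3
  obtain ⟨ha1, ha2⟩ := abs_lt.mp h12
  obtain ⟨hb1, hb2⟩ := abs_lt.mp h13
  obtain ⟨hc1, hc2⟩ := abs_lt.mp h23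
  set a := dot3 n₁ n₂ with ha
  set b := dot3 n₁ n₃ with hb
  set c := dot3 n₂ n₃ with hc
  -- Cauchy-Schwarz: (a+b)^2 ≤ 2 + 2c
  have cs : (a + b)^2 ≤ 2 + 2*c := by
    have e1 : a + b = dot3 n₁ (fun i => n₂ i + n₃ i) := by
      simp only [ha, hb]; unfold dot3; ring
    have e2 : 2 + 2*c = dot3 (fun i => n₂ i + n₃ i) (fun i => n₂ i + n₃ i) := by
      simp only [hc, dot3]
      unfold dot3 at d2 d3
      linear_combination -d2 - d3
    rw [e1, e2]
    simp only [dot3]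
    unfold dot3 at d1
    nlinarith [sq_nonneg (n₁ 0 * (n₂ 1 + n₃ 1) - n₁ 1 * (n₂ 0 + n₃ 0)),
      sq_nonneg (n₁ 0 * (n₂ 2 + n₃ 2) - n₁ 2 * (n₂ 0 + n₃ 0)),
      sq_nonneg (n₁ 1 * (n₂ 2 + n₃ 2) - n₁ 2 * (n₂ 1 + n₃ 1)), d1]
  set t := Real.sqrt (1 + c) with ht
  have ht0 : 0 < t := Real.sqrt_pos.mpr (by linarith)
  have ht2 : t < Real.sqrt 2 := by
    apply Real.sqrt_lt_sqrt (by linarith)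
    linarith
  have hs2 : (0:ℝ) ≤ Real.sqrt 2 := Real.sqrt_nonneg 2
  have hts : t^2 = 1 + c := Real.sq_sqrt (by linarith)
  have hsq2 : (Real.sqrt 2)^2 = 2 := Real.sq_sqrt (by norm_num)
  -- a + b ≥ -√2 * t
  have hab : -(Real.sqrt 2 * t) ≤ a + b := by
    have h22 : (Real.sqrt 2 * t)^2 = 2 + 2*c := by
      rw [mul_pow, hsq2, hts]; ring
    by_contra hcon
    push_neg at hcon
    have hst : 0 ≤ Real.sqrt 2 * t := mul_nonneg hs2 ht0.le
    have hgt : (Real.sqrt 2 * t)^2 < (a + b)^2 := by nlinarith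
    linarith [h22, cs, hgt]
  -- √(1+a) + √(1+b) ≥ √(2+a+b)
  set p := Real.sqrt (1 + a) with hp
  set q := Real.sqrt (1 + b) with hq
  have hp2 : p^2 = 1 + a := Real.sq_sqrt (by linarith)
  have hq2 : q^2 = 1 + b := Real.sq_sqrt (by linarith)
  have hp0 : 0 ≤ p := Real.sqrt_nonneg _
  have hq0 : 0 ≤ q := Real.sqrt_nonneg _
  have hsub : Real.sqrt (2 + a + b) ≤ p + q := by
    have : 2 + a + b ≤ (p + q)^2 := by nlinarith
    calc Real.sqrt (2 + a + b) ≤ Real.sqrt ((p+q)^2) := Real.sqrt_le_sqrt this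
      _ = p + q := Real.sqrt_sq (by linarith)
  have hmono : Real.sqrt (2 - Real.sqrt 2 * t) ≤ Real.sqrt (2 + a + b) :=
    Real.sqrt_le_sqrt (by linarith)
  -- final: √(2 - √2 t) > √2 - t
  have hfin : Real.sqrt 2 - t < Real.sqrt (2 - Real.sqrt 2 * t) := by
    have h0 : (0:ℝ) ≤ Real.sqrt 2 - t := by linarith
    rw [Real.lt_sqrt h0]
    nlinarith [hts, hsq2, mul_pos ht0 (show (0:ℝ) < Real.sqrt 2 - t by linarith)]
  linarith

end
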